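/- Suppose X ⊂ [0,1]^m satisfies dim X < s (Hausdorff dimension). Then for every ε > 0 there exist collections C_{2^{-k}} of dyadic cubes of side length 2^{-k} (k > 0) such that: (1) X ⊂ ∪_{k>0} ∪_{D ∈ C_{2^{-k}}} D; (2) Σ_{k>0} Σ_{D ∈ C_{2^{-k}}} r(D)^s ≤ ε; (3) for every l < k and every dyadic cube D of side length 2^{-l}, the number of cubes D′ ∈ C_{2^{-k}} contained in D is at most 2^{(k−l)s}. -/

import Mathlib

open Metric Set MeasureTheory
open scoped ENNReal

noncomputable section

/-- The dyadic cube of side `2^{-k}` indexed by `z ∈ ℕ^m`. -/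
def dyCube (m k : ℕ) (z : Fin m → ℕ) : Set (Fin m → ℝ) :=
  {x | ∀ i, (z i : ℝ) / 2 ^ k ≤ x i ∧ x i < ((z i : ℝ) + 1) / 2 ^ k}

namespace DyAux

variable {m : ℕ}

abbrev P (m : ℕ) := ℕ × (Fin m → ℕ)

def cube (p : P m) : Set (Fin m → ℝ) := dyCube m p.1 p.2

def Sub (p q : P m) : Prop := q.1 ≤ p.1 ∧ ∀ i, q.2 i = p.2 i / 2 ^ (p.1 - q.1)

lemma Sub.rfl (p : P m) : Sub p p := ⟨le_rfl, fun i => by simp⟩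

lemma Sub.trans {p q r : P m} (h1 : Sub p q) (h2 : Sub q r) : Sub p r := by
  refine ⟨h2.1.trans h1.1, fun i => ?_⟩
  rw [h2.2 i, h1.2 i, Nat.div_div_eq_div_mul, ← pow_add]
  congr 2
  have := h1.1; have := h2.1; omega

lemma Sub.antisymm {p q : P m} (h1 : Sub p q) (h2 : Sub q p) : p = q := by
  have hk : p.1 = q.1 := le_antisymm h2.1 h1.1
  have hz : q.2 = p.2 := by
    funext i
    rw [h1.2 i, hk, Nat.sub_self, pow_zero, Nat.div_one]
  exact Prod.ext hk hz.symm

lemma cube_nonempty (p : P m) : (cube p).Nonempty := by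
  refine ⟨fun i => (p.2 i : ℝ) / 2 ^ p.1, fun i => ⟨le_rfl, ?_⟩⟩
  have : (0:ℝ) < 2 ^ p.1 := by positivity
  rw [div_lt_div_iff_of_pos_right this]
  linarith

lemma cube_mono {p q : P m} (h : Sub p q) : cube p ⊆ cube q := by
  obtain ⟨⟨k, z⟩, l, w⟩ := p, q
  obtain ⟨hlk, hw⟩ := h
  simp only at hlk hw
  intro x hx i
  simp only [cube, dyCube, Set.mem_setOf_eq] at hx ⊢
  obtain ⟨hx1, hx2⟩ := hx i
  have hd : (2:ℝ) ^ k = 2 ^ (k - l) * 2 ^ l := by rw [← pow_add]; congr 1; omega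
  have h2l : (0:ℝ) < 2 ^ l := by positivity
  have h2k : (0:ℝ) < 2 ^ k := by positivity
  have h1 : (w i * 2 ^ (k - l) : ℕ) ≤ z i := by rw [hw i]; exact Nat.div_mul_le_self _ _
  have h2 : z i + 1 ≤ (w i + 1) * 2 ^ (k - l) := by
    have : z i / 2 ^ (k - l) < w i + 1 := by rw [← hw i]; omega
    have := (Nat.div_lt_iff_lt_mul (by positivity)).1 this
    omega
  constructor
  · have : ((w i * 2 ^ (k - l) : ℕ) : ℝ) / 2 ^ k ≤ (z i : ℝ) / 2 ^ k := by
      gcongr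
    calc (w i : ℝ) / 2 ^ l = ((w i * 2 ^ (k - l) : ℕ) : ℝ) / 2 ^ k := by
          push_cast; rw [hd]; field_simp
      _ ≤ (z i : ℝ) / 2 ^ k := this
      _ ≤ x i := hx1
  · have : ((z i : ℝ) + 1) / 2 ^ k ≤ (((w i + 1) * 2 ^ (k - l) : ℕ) : ℝ) / 2 ^ k := by
      gcongr; exact_mod_cast h2
    calc x i < ((z i : ℝ) + 1) / 2 ^ k := hx2
      _ ≤ (((w i + 1) * 2 ^ (k - l) : ℕ) : ℝ) / 2 ^ k := this
      _ = ((w i : ℝ) + 1) / 2 ^ l := by push_cast; rw [hd]; field_simp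

lemma sub_of_inter {p q : P m} (hlk : q.1 ≤ p.1) (hne : (cube p ∩ cube q).Nonempty) :
    Sub p q := by
  obtain ⟨x, hxp, hxq⟩ := hne
  refine ⟨hlk, fun i => ?_⟩
  obtain ⟨⟨k, z⟩, l, w⟩ := p, q
  simp only [cube, dyCube, Set.mem_setOf_eq] at hxp hxq
  obtain ⟨hp1, hp2⟩ := hxp i
  obtain ⟨hq1, hq2⟩ := hxq i
  simp only at hlk ⊢
  have hd : (2:ℝ) ^ k = 2 ^ (k - l) * 2 ^ l := by rw [← pow_add]; congr 1; omega
  have h2l : (0:ℝ) < 2 ^ l := by positivity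
  have h2k : (0:ℝ) < 2 ^ k := by positivity
  have hpos : (0:ℕ) < 2 ^ (k - l) := by positivity
  -- z i < (w i + 1) * 2^(k-l)
  have h1 : (z i : ℝ) < ((w i : ℝ) + 1) * 2 ^ (k - l) := by
    have : (z i : ℝ) / 2 ^ k < ((w i : ℝ) + 1) / 2 ^ l := lt_of_le_of_lt hp1 hq2
    rw [div_lt_div_iff₀ h2k h2l] at this
    calc (z i : ℝ) = z i * 2 ^ l / 2 ^ l := by field_simp
      _ < ((w i : ℝ) + 1) * 2 ^ k / 2 ^ l := by gcongr
      _ = ((w i : ℝ) + 1) * 2 ^ (k - l) := by rw [hd]; field_simp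
  have h1' : z i < (w i + 1) * 2 ^ (k - l) := by exact_mod_cast h1
  -- w i * 2^(k-l) < z i + 1
  have h2 : (w i : ℝ) * 2 ^ (k - l) < (z i : ℝ) + 1 := by
    have : (w i : ℝ) / 2 ^ l < ((z i : ℝ) + 1) / 2 ^ k := lt_of_le_of_lt hq1 hp2
    rw [div_lt_div_iff₀ h2l h2k] at this
    calc (w i : ℝ) * 2 ^ (k - l) = w i * 2 ^ k / 2 ^ l := by rw [hd]; field_simp
      _ < ((z i : ℝ) + 1) * 2 ^ l / 2 ^ l := by gcongr
      _ = (z i : ℝ) + 1 := by field_simp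
  have h2' : w i * 2 ^ (k - l) < z i + 1 := by exact_mod_cast h2
  have hle : w i ≤ z i / 2 ^ (k - l) := Nat.le_div_iff_mul_le hpos |>.2 (by omega)
  have hlt : z i / 2 ^ (k - l) < w i + 1 := (Nat.div_lt_iff_lt_mul hpos).2 h1'
  omega



def con (s : ℝ) (k : ℕ) : ℝ≥0∞ := ((2:ℝ≥0∞)⁻¹ ^ k) ^ (s : ℝ)

lemma base_ne_zero (k : ℕ) : ((2:ℝ≥0∞)⁻¹ ^ k) ≠ 0 := by
  apply pow_ne_zero; simp

lemma base_ne_top (k : ℕ) : ((2:ℝ≥0∞)⁻¹ ^ k) ≠ ⊤ := by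
  apply ENNReal.pow_ne_top; simp [ENNReal.inv_ne_top]

lemma con_zero (s : ℝ) : con s 0 = 1 := by simp [con]

lemma con_ne_zero (s : ℝ) (k : ℕ) : con s k ≠ 0 := by
  simp [con, ENNReal.rpow_eq_zero_iff, base_ne_zero k, base_ne_top k]

lemma con_ne_top (s : ℝ) (k : ℕ) : con s k ≠ ⊤ := by
  simp [con, ENNReal.rpow_eq_top_iff, base_ne_zero k, base_ne_top k]

lemma con_eq_ofReal (s : ℝ) (k : ℕ) : con s k = ENNReal.ofReal (((2:ℝ)⁻¹ ^ k) ^ s) := by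
  have h1 : ((2:ℝ≥0∞)⁻¹ ^ k) = ENNReal.ofReal ((2:ℝ)⁻¹ ^ k) := by
    rw [ENNReal.ofReal_pow (by norm_num)]
    congr 1
    rw [ENNReal.ofReal_inv_of_pos (by norm_num)]
    norm_num
  rw [con, h1, ← ENNReal.ofReal_rpow_of_pos (by positivity)]


variable {m : ℕ}

def anc (p : P m) (l : ℕ) : P m := (l, fun i => p.2 i / 2 ^ (p.1 - l))

lemma sub_anc (p : P m) {l : ℕ} (hl : l ≤ p.1) : Sub p (anc p l) := ⟨hl, fun _ => rfl⟩

lemma anc_self (p : P m) : anc p p.1 = p := by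
  refine Prod.ext rfl ?_
  funext i
  simp [anc]

lemma eq_anc_of_sub {p q : P m} (h : Sub p q) : q = anc p q.1 :=
  Prod.ext rfl (funext fun i => h.2 i)

lemma sum_con_image (s : ℝ) (k : ℕ) (Tz : Finset (Fin m → ℕ)) :
    ∑ p ∈ Tz.image (Prod.mk k), con s p.1 = Tz.card * con s k := by
  rw [Finset.sum_image (fun a _ b _ h => (Prod.ext_iff.1 h).2)]
  simp [Finset.sum_const, mul_comm]

theorem core {s : ℝ} (hs : 0 < s) {ι : Type} [Countable ι] (f : ι → P m)
    {ε₀ : ℝ≥0∞} (hε₁ : ε₀ < 1) (htot : ∑' i, con s (f i).1 ≤ ε₀) :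
    ∃ 𝒞 : ℕ → Set (Fin m → ℕ),
      (∀ k, (𝒞 k).Finite) ∧ 𝒞 0 = ∅ ∧
      ((⋃ i, cube (f i)) ⊆ ⋃ k, ⋃ z ∈ 𝒞 k, dyCube m k z) ∧
      (∑' k, ((𝒞 k).ncard : ℝ≥0∞) * con s k ≤ ε₀) ∧
      (∀ k l : ℕ, l < k → ∀ w : Fin m → ℕ,
        (({z ∈ 𝒞 k | dyCube m k z ⊆ dyCube m l w}.ncard : ℝ)) ≤ (2:ℝ) ^ (((k:ℝ) - l) * s)) := by
  classical
  set W : P m → ℝ≥0∞ := fun q => ∑' i, if Sub (f i) q then con s (f i).1 else 0 with hW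
  have hW_le_tot : ∀ q, W q ≤ ε₀ := by
    intro q
    refine le_trans (Summable.tsum_le_tsum (fun i => ?_) ENNReal.summable ENNReal.summable) htot
    split <;> simp
  have hself : ∀ i, con s (f i).1 ≤ W (f i) := by
    intro i
    have := ENNReal.le_tsum (f := fun j => if Sub (f j) (f i) then con s (f j).1 else 0) i
    simpa [Sub.rfl] using this
  set F : Set (P m) := {q | con s q.1 ≤ W q} with hF
  have hmemF : ∀ i, f i ∈ F := fun i => hself i
  have hF1 : ∀ q ∈ F, 1 ≤ q.1 := by
    intro q hq
    by_contra h
    push_neg at h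
    interval_cases hq1 : q.1
    · have : (1:ℝ≥0∞) ≤ ε₀ := by
        have := le_trans hq (hW_le_tot q)
        rwa [hq1, con_zero] at this
      exact absurd hε₁ (not_lt.2 this)
  -- maximal elements
  set M : Set (P m) := {q | q ∈ F ∧ ∀ q', q' ∈ F → Sub q q' → q' = q} with hM
  have hmax : ∀ i, ∃ q ∈ M, Sub (f i) q := by
    intro i
    set S : Set ℕ := {l | anc (f i) l ∈ F} with hS
    have hSne : (f i).1 ∈ S := by
      simp only [hS, Set.mem_setOf_eq, anc_self]
      exact hmemF i
    have hl₀F : anc (f i) (sInf S) ∈ F := Nat.sInf_mem ⟨_, hSne⟩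
    have hl₀le : sInf S ≤ (f i).1 := Nat.sInf_le hSne
    refine ⟨anc (f i) (sInf S), ⟨hl₀F, ?_⟩, sub_anc _ hl₀le⟩
    intro q' hq' hsub
    have hsub' : Sub (f i) q' := (sub_anc _ hl₀le).trans hsub
    have hq'anc : q' = anc (f i) q'.1 := eq_anc_of_sub hsub'
    have hq'S : q'.1 ∈ S := by rw [hS, Set.mem_setOf_eq, ← hq'anc]; exact hq'
    have h1 : sInf S ≤ q'.1 := Nat.sInf_le hq'S
    have h2 : q'.1 ≤ sInf S := hsub.1
    have : q'.1 = sInf S := le_antisymm h2 h1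
    rw [hq'anc, this]
  have hdisj : ∀ p ∈ M, ∀ q ∈ M, ∀ i, Sub (f i) p → Sub (f i) q → p = q := by
    intro p hp q hq i hip hiq
    have hne : (cube p ∩ cube q).Nonempty := by
      obtain ⟨x, hx⟩ := cube_nonempty (f i)
      exact ⟨x, cube_mono hip hx, cube_mono hiq hx⟩
    rcases le_total q.1 p.1 with h | h
    · exact (hp.2 q hq.1 (sub_of_inter h hne)).symm ▸ rfl
    · exact hq.2 p hp.1 (sub_of_inter h ⟨hne.choose, hne.choose_spec.2, hne.choose_spec.1⟩)
  have hinjk : ∀ k : ℕ, Function.Injective (Prod.mk k : (Fin m → ℕ) → P m) :=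
    fun k a b h => (Prod.ext_iff.1 h).2
  -- key counting bound
  have hsum : ∀ (T : Finset (P m)), (↑T ⊆ M) → ∀ (B : ι → Prop),
      (∀ p ∈ T, ∀ i, Sub (f i) p → B i) →
      (∑ p ∈ T, con s p.1) ≤ ∑' i, if B i then con s (f i).1 else 0 := by
    intro T hT B hB
    have step1 : (∑ p ∈ T, con s p.1) ≤ ∑ p ∈ T, W p :=
      Finset.sum_le_sum fun p hp => (hT hp).1
    have step2 : ∑ p ∈ T, W p = ∑' i, ∑ p ∈ T, if Sub (f i) p then con s (f i).1 else 0 :=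
      (Summable.tsum_finsetSum (fun _ _ => ENNReal.summable)).symm
    have step3 : ∀ i, (∑ p ∈ T, if Sub (f i) p then con s (f i).1 else 0)
        ≤ if B i then con s (f i).1 else 0 := by
      intro i
      rw [← Finset.sum_filter]
      by_cases hex : ∃ p ∈ T, Sub (f i) p
      · obtain ⟨p₀, hp₀T, hp₀⟩ := hex
        have hcard : (T.filter (fun p => Sub (f i) p)).card ≤ 1 := by
          refine Finset.card_le_one.2 fun a ha b hb => ?_
          simp only [Finset.mem_filter] at ha hb
          rw [hdisj a (hT ha.1) b (hT hb.1) i ha.2 hb.2]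
        have hBi : B i := hB p₀ hp₀T i hp₀
        rw [Finset.sum_const, if_pos hBi]
        calc (T.filter (fun p => Sub (f i) p)).card • con s (f i).1
            ≤ 1 • con s (f i).1 := by
              exact nsmul_le_nsmul_left zero_le hcard
          _ = con s (f i).1 := one_nsmul _
      · push_neg at hex
        have : T.filter (fun p => Sub (f i) p) = ∅ := by
          refine Finset.filter_eq_empty_iff.2 fun {p} hp => hex p hp
        rw [this]
        simp
    calc (∑ p ∈ T, con s p.1) ≤ ∑ p ∈ T, W p := step1
      _ = _ := step2
      _ ≤ _ := Summable.tsum_le_tsum step3 ENNReal.summable ENNReal.summable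
  have hsum_tot : ∀ (T : Finset (P m)), (↑T ⊆ M) → (∑ p ∈ T, con s p.1) ≤ ε₀ := by
    intro T hT
    refine le_trans (hsum T hT (fun _ => True) (fun _ _ _ _ => trivial)) ?_
    simpa using htot
  -- the collections
  set 𝒞 : ℕ → Set (Fin m → ℕ) := fun k => {z | (k, z) ∈ M} with h𝒞
  have hfinset_bound : ∀ k (Tz : Finset (Fin m → ℕ)), ↑Tz ⊆ 𝒞 k →
      (Tz.card : ℝ≥0∞) * con s k ≤ ε₀ := by
    intro k Tz hTz
    have hT : ↑(Tz.image (Prod.mk k)) ⊆ M := by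
      intro p hp
      simp only [Finset.coe_image, Set.mem_image, Finset.mem_coe] at hp
      obtain ⟨z, hz, rfl⟩ := hp
      exact hTz hz
    have := hsum_tot (Tz.image (Prod.mk k)) hT
    rwa [sum_con_image] at this
  have hfin : ∀ k, (𝒞 k).Finite := by
    intro k
    by_contra hinf
    rw [← Set.not_infinite, not_not] at hinf
    obtain ⟨N, hN⟩ := ENNReal.exists_nat_gt (r := ε₀ / con s k) (by
      simp [ENNReal.div_eq_top, con_ne_zero s k, hε₁.ne_top])
    obtain ⟨Tz, hTz, hcard⟩ := hinf.exists_subset_card_eq N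
    have hle := hfinset_bound k Tz hTz
    rw [hcard] at hle
    have : ε₀ < N * con s k := by
      rwa [ENNReal.div_lt_iff (Or.inl (con_ne_zero s k)) (Or.inl (con_ne_top s k))] at hN
    exact absurd hle (not_le.2 this)
  refine ⟨𝒞, hfin, ?_, ?_, ?_, ?_⟩
  · -- 𝒞 0 = ∅
    ext z
    simp only [h𝒞, Set.mem_setOf_eq, Set.mem_empty_iff_false, iff_false]
    intro hz
    exact absurd (hF1 _ hz.1) (by norm_num)
  · -- cover
    intro x hx
    simp only [Set.mem_iUnion] at hx ⊢
    obtain ⟨i, hxi⟩ := hx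
    obtain ⟨q, hqM, hsub⟩ := hmax i
    exact ⟨q.1, q.2, by simpa [h𝒞] using hqM, cube_mono hsub hxi⟩
  · -- total sum
    rw [ENNReal.tsum_eq_iSup_sum]
    refine iSup_le fun K => ?_
    set T : Finset (P m) := K.biUnion (fun k => ((hfin k).toFinset.image (Prod.mk k))) with hT
    have hTM : ↑T ⊆ M := by
      intro p hp
      simp only [hT, Finset.coe_biUnion, Set.mem_iUnion, Finset.coe_image, Set.mem_image,
        Finset.mem_coe, Set.Finite.mem_toFinset] at hp
      obtain ⟨k, _, z, hz, rfl⟩ := hp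
      simpa [h𝒞] using hz
    refine le_trans (le_of_eq ?_) (hsum_tot T hTM)
    rw [hT, Finset.sum_biUnion]
    · refine Finset.sum_congr rfl fun k _ => ?_
      rw [sum_con_image]
      congr 1
      rw [Set.ncard_eq_toFinset_card _ (hfin k)]
    · intro a _ b _ hab
      simp only [Finset.disjoint_left]
      intro p hp hq
      simp only [Finset.mem_image, Set.Finite.mem_toFinset] at hp hq
      obtain ⟨za, _, rfl⟩ := hp
      obtain ⟨zb, _, h⟩ := hq
      exact hab ((Prod.ext_iff.1 h).1).symm
  · -- spacing
    intro k l hlk w₀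
    set Sz : Set (Fin m → ℕ) := {z ∈ 𝒞 k | dyCube m k z ⊆ dyCube m l w₀} with hSz
    have hSzfin : Sz.Finite := (hfin k).subset (fun z hz => hz.1)
    rcases Set.eq_empty_or_nonempty Sz with hem | ⟨z₀, hz₀⟩
    · rw [hem]
      simp only [Set.ncard_empty, Nat.cast_zero]
      positivity
    · set q₀ : P m := (l, w₀) with hq₀
      have hsubq₀ : ∀ z ∈ Sz, Sub (k, z) q₀ := by
        intro z hz
        refine sub_of_inter (le_of_lt hlk) ?_
        obtain ⟨x, hx⟩ := cube_nonempty (k, z)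
        exact ⟨x, hx, hz.2 hx⟩
      have hq₀F : q₀ ∉ F := by
        intro hq₀F
        have hMz₀ : (k, z₀) ∈ M := hz₀.1
        have := hMz₀.2 q₀ hq₀F (hsubq₀ z₀ hz₀)
        have : l = k := congrArg Prod.fst this
        omega
      have hWq₀ : W q₀ < con s l := by
        rw [hF, Set.mem_setOf_eq, not_le] at hq₀F
        exact hq₀F
      -- N * con s k ≤ W q₀
      set T : Finset (P m) := (hSzfin.toFinset.image (Prod.mk k)) with hT
      have hTM : ↑T ⊆ M := by
        intro p hp
        simp only [hT, Finset.coe_image, Set.mem_image, Finset.mem_coe,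
          Set.Finite.mem_toFinset] at hp
        obtain ⟨z, hz, rfl⟩ := hp
        exact hz.1
      have hkey := hsum T hTM (fun i => Sub (f i) q₀) (by
        intro p hp i hip
        simp only [hT, Finset.mem_image, Set.Finite.mem_toFinset] at hp
        obtain ⟨z, hz, rfl⟩ := hp
        exact hip.trans (hsubq₀ z hz))
      have hsum_eq : (∑ p ∈ T, con s p.1) = (Sz.ncard : ℝ≥0∞) * con s k := by
        rw [hT, sum_con_image]
        congr 1
        rw [Set.ncard_eq_toFinset_card _ hSzfin]
      have hmain : (Sz.ncard : ℝ≥0∞) * con s k ≤ con s l := by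
        rw [← hsum_eq]
        exact le_trans hkey (le_of_lt hWq₀)
      -- convert to reals
      have hreal : (Sz.ncard : ℝ) * ((2:ℝ)⁻¹ ^ k) ^ s ≤ ((2:ℝ)⁻¹ ^ l) ^ s := by
        have h1 : ((Sz.ncard : ℝ≥0∞)) * con s k = ENNReal.ofReal ((Sz.ncard : ℝ) * ((2:ℝ)⁻¹ ^ k) ^ s) := by
          rw [con_eq_ofReal, ENNReal.ofReal_mul (by positivity)]
          congr 1
          exact (ENNReal.ofReal_natCast _).symm
        rw [h1, con_eq_ofReal] at hmain
        exact (ENNReal.ofReal_le_ofReal_iff (by positivity)).1 hmain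
      have h2k : ((2:ℝ)⁻¹ ^ k) ^ s = (2:ℝ) ^ (-(k:ℝ) * s) := by
        rw [← Real.rpow_natCast (2:ℝ)⁻¹ k, ← Real.rpow_mul (by norm_num),
          Real.inv_rpow (by norm_num), ← Real.rpow_neg (by norm_num)]
        ring_nf
      have h2l : ((2:ℝ)⁻¹ ^ l) ^ s = (2:ℝ) ^ (-(l:ℝ) * s) := by
        rw [← Real.rpow_natCast (2:ℝ)⁻¹ l, ← Real.rpow_mul (by norm_num),
          Real.inv_rpow (by norm_num), ← Real.rpow_neg (by norm_num)]
        ring_nf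
      rw [h2k, h2l] at hreal
      have hpos : (0:ℝ) < (2:ℝ) ^ (-(k:ℝ) * s) := Real.rpow_pos_of_pos (by norm_num) _
      calc (Sz.ncard : ℝ) = (Sz.ncard : ℝ) * (2:ℝ) ^ (-(k:ℝ) * s) / (2:ℝ) ^ (-(k:ℝ) * s) := by
            field_simp
        _ ≤ (2:ℝ) ^ (-(l:ℝ) * s) / (2:ℝ) ^ (-(k:ℝ) * s) := by gcongr
        _ = (2:ℝ) ^ (((k:ℝ) - l) * s) := by
            rw [← Real.rpow_sub (by norm_num)]
            ring_nf

lemma base_ofReal (k : ℕ) : (2:ℝ≥0∞)⁻¹ ^ k = ENNReal.ofReal ((2:ℝ)⁻¹ ^ k) := by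
  rw [ENNReal.ofReal_pow (by norm_num)]
  congr 1
  rw [ENNReal.ofReal_inv_of_pos (by norm_num)]
  norm_num

lemma con_eq_pow (s : ℝ) (n : ℕ) : con s n = ((2:ℝ≥0∞)⁻¹ ^ (s:ℝ)) ^ n := by
  rw [con, ← ENNReal.rpow_natCast ((2:ℝ≥0∞)⁻¹) n, ← ENNReal.rpow_mul, mul_comm,
    ENNReal.rpow_mul, ENNReal.rpow_natCast]

end DyAux

open DyAux in
theorem dyadic_covering_of_small_dim (m : ℕ) (s : ℝ) (hs : 0 < s)
    (X : Set (Fin m → ℝ)) (hX : X ⊆ {x | ∀ i, x i ∈ Icc (0:ℝ) 1})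
    (hdim : dimH X < ENNReal.ofReal s) (ε : ℝ) (hε : 0 < ε) :
    ∃ 𝒞 : ℕ → Set (Fin m → ℕ),
      (∀ k, (𝒞 k).Finite) ∧ 𝒞 0 = ∅ ∧
      (X ⊆ ⋃ k, ⋃ z ∈ 𝒞 k, dyCube m k z) ∧
      (∑' k, ((𝒞 k).ncard : ℝ≥0∞) * (((2:ℝ≥0∞)⁻¹ ^ k) ^ (s : ℝ)) ≤ ENNReal.ofReal ε) ∧
      (∀ k l : ℕ, l < k → ∀ w : Fin m → ℕ,
        (({z ∈ 𝒞 k | dyCube m k z ⊆ dyCube m l w}.ncard : ℝ)) ≤ (2:ℝ) ^ (((k:ℝ) - l) * s)) := by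
  classical
  -- choose ε₀
  set ε₀ : ℝ≥0∞ := min (ENNReal.ofReal ε) 2⁻¹ with hε₀def
  have hε₀pos : 0 < ε₀ := lt_min (ENNReal.ofReal_pos.2 hε) (by norm_num)
  have hε₀lt1 : ε₀ < 1 := lt_of_le_of_lt (min_le_right _ _) (by norm_num)
  have hε₀le : ε₀ ≤ ENNReal.ofReal ε := min_le_left _ _
  -- Hausdorff measure is zero
  have hμ : μH[s] X = 0 := by
    have hdim' : dimH X < (s.toNNReal : ℝ≥0∞) := hdim
    have h0 := hausdorffMeasure_of_dimH_lt hdim'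
    rwa [Real.coe_toNNReal s hs.le] at h0
  -- constants
  set a : ℝ≥0∞ := (2:ℝ≥0∞)⁻¹ ^ (s:ℝ) with ha
  have ha1 : a < 1 := by
    rw [ha]
    exact ENNReal.rpow_lt_one (by norm_num) hs
  have ha0 : a ≠ 0 := by
    rw [ha]
    simp [ENNReal.rpow_eq_zero_iff]
  have hna0 : (1:ℝ≥0∞) - a ≠ 0 := by
    simp only [ne_eq, tsub_eq_zero_iff_le, not_le]
    exact ha1
  have hnatop : (1:ℝ≥0∞) - a ≠ ⊤ := ne_top_of_le_ne_top (by norm_num) tsub_le_self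
  set twoS : ℝ≥0∞ := (2:ℝ≥0∞) ^ (s:ℝ) with htwoS
  have htwoS_ne_top : twoS ≠ ⊤ := by
    rw [htwoS]
    exact ENNReal.rpow_ne_top_of_nonneg hs.le (by norm_num)
  set D : ℝ≥0∞ := (3:ℝ≥0∞) ^ m * twoS * 2 with hD
  have hD_ne_top : D ≠ ⊤ := by
    rw [hD]
    exact ENNReal.mul_ne_top
      (ENNReal.mul_ne_top (ENNReal.pow_ne_top (by norm_num)) htwoS_ne_top) (by norm_num)
  set δ : ℝ≥0∞ := ε₀ / D with hδ
  have hδpos : 0 < δ := ENNReal.div_pos hε₀pos.ne' hD_ne_top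
  -- extract a cover from Hausdorff measure zero
  have happ := MeasureTheory.Measure.hausdorffMeasure_apply s X
  rw [hμ] at happ
  have hinf0 : (⨅ (t : ℕ → Set (Fin m → ℝ)) (_ : X ⊆ ⋃ n, t n)
      (_ : ∀ n, EMetric.diam (t n) ≤ 2⁻¹),
      ∑' n, ⨆ _ : (t n).Nonempty, EMetric.diam (t n) ^ s) = 0 := by
    refine le_antisymm ?_ zero_le
    rw [happ]
    exact le_iSup₂ (f := fun (r : ℝ≥0∞) (_ : 0 < r) =>
      ⨅ (t : ℕ → Set (Fin m → ℝ)) (_ : X ⊆ ⋃ n, t n) (_ : ∀ n, EMetric.diam (t n) ≤ r),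
      ∑' n, ⨆ _ : (t n).Nonempty, EMetric.diam (t n) ^ s) 2⁻¹ (by norm_num)
  have hlt : (⨅ (t : ℕ → Set (Fin m → ℝ)) (_ : X ⊆ ⋃ n, t n)
      (_ : ∀ n, EMetric.diam (t n) ≤ 2⁻¹),
      ∑' n, ⨆ _ : (t n).Nonempty, EMetric.diam (t n) ^ s) < δ := by
    rw [hinf0]; exact hδpos
  simp only [iInf_lt_iff] at hlt
  obtain ⟨t, htcov, htdiam, htsum⟩ := hlt
  -- choose k₀ for the geometric tail
  have htail : ∃ k₀ : ℕ, 1 ≤ k₀ ∧ (∑' n : ℕ, a ^ (n + k₀)) ≤ δ := by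
    have htendsto := ENNReal.tendsto_pow_atTop_nhds_zero_of_lt_one ha1
    have hδa : 0 < δ * (1 - a) := ENNReal.mul_pos hδpos.ne' hna0
    have hev := htendsto.eventually_lt_const hδa
    obtain ⟨k₀, hk₀⟩ := (hev.and (Filter.eventually_ge_atTop 1)).exists
    refine ⟨k₀, hk₀.2, ?_⟩
    have hgeom : (∑' n : ℕ, a ^ (n + k₀)) = (1 - a)⁻¹ * a ^ k₀ := by
      simp only [pow_add]
      rw [ENNReal.tsum_mul_right, ENNReal.tsum_geometric]
    rw [hgeom]
    calc (1 - a)⁻¹ * a ^ k₀ ≤ (1 - a)⁻¹ * (δ * (1 - a)) := mul_le_mul_right hk₀.1.le _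
      _ = δ * ((1 - a)⁻¹ * (1 - a)) := by ring
      _ = δ := by rw [ENNReal.inv_mul_cancel hna0 hnatop, mul_one]
  obtain ⟨k₀, hk₀1, hk₀tail⟩ := htail
  -- effective diameters
  set d' : ℕ → ℝ≥0∞ := fun n => max (EMetric.diam (t n)) ((2:ℝ≥0∞)⁻¹ ^ (n + k₀)) with hd'
  have hd'pos : ∀ n, d' n ≠ 0 := fun n =>
    fun h => (base_ne_zero (n + k₀)) (le_antisymm (le_of_le_of_eq (le_max_right _ _) h)
      zero_le)
  have hd'le : ∀ n, d' n ≤ 2⁻¹ := by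
    intro n
    refine max_le (htdiam n) ?_
    calc (2:ℝ≥0∞)⁻¹ ^ (n + k₀) ≤ 2⁻¹ ^ 1 := by
          refine pow_le_pow_right_of_le_one' (by norm_num) (by omega)
      _ = 2⁻¹ := pow_one _
  -- the levels
  have hlev : ∀ n : ℕ, ∃ k : ℕ, 1 ≤ k ∧ d' n ≤ (2:ℝ≥0∞)⁻¹ ^ k ∧
      (2:ℝ≥0∞)⁻¹ ^ k < 2 * d' n := by
    intro n
    set G : Set ℕ := {j | d' n ≤ (2:ℝ≥0∞)⁻¹ ^ j} with hG
    have h1G : 1 ∈ G := by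
      rw [hG, Set.mem_setOf_eq, pow_one]
      exact hd'le n
    obtain ⟨j₀, hj₀⟩ := ENNReal.exists_inv_two_pow_lt (hd'pos n)
    have hbdd : BddAbove G := by
      refine ⟨j₀, fun j hj => ?_⟩
      by_contra hcon
      push_neg at hcon
      have : (2:ℝ≥0∞)⁻¹ ^ j ≤ 2⁻¹ ^ j₀ :=
        pow_le_pow_right_of_le_one' (by norm_num) hcon.le
      exact absurd (le_trans hj this) (not_le.2 hj₀)
    refine ⟨sSup G, le_csSup hbdd h1G, Nat.sSup_mem ⟨1, h1G⟩ hbdd, ?_⟩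
    have hnot : sSup G + 1 ∉ G := fun hmem => by
      have := le_csSup hbdd hmem
      omega
    rw [hG, Set.mem_setOf_eq, not_le] at hnot
    calc (2:ℝ≥0∞)⁻¹ ^ sSup G = 2 * 2⁻¹ ^ (sSup G + 1) := by
          rw [pow_succ']
          rw [← mul_assoc, ENNReal.mul_inv_cancel (by norm_num) (by norm_num), one_mul]
      _ < 2 * d' n := by
          refine ENNReal.mul_lt_mul_right (a := 2) (by norm_num) (by norm_num) hnot
  choose kk hkk1 hkkle hkklt using hlev
  -- content bound per set
  have hcon_bound : ∀ n, con s (kk n) ≤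
      twoS * ((⨆ _ : (t n).Nonempty, EMetric.diam (t n) ^ s) + a ^ (n + k₀)) := by
    intro n
    have h1 : con s (kk n) ≤ (2 * d' n) ^ (s:ℝ) := by
      rw [con]
      exact ENNReal.rpow_le_rpow (hkklt n).le hs.le
    have h2 : (2 * d' n) ^ (s:ℝ) = twoS * (d' n) ^ (s:ℝ) := by
      rw [ENNReal.mul_rpow_of_nonneg _ _ hs.le, htwoS]
    have h3 : (d' n) ^ (s:ℝ) ≤ (⨆ _ : (t n).Nonempty, EMetric.diam (t n) ^ s) + a ^ (n + k₀) := by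
      rcases max_cases (EMetric.diam (t n)) ((2:ℝ≥0∞)⁻¹ ^ (n + k₀)) with ⟨heq, hge⟩ | ⟨heq, _⟩
      · have hne : (t n).Nonempty := by
          by_contra hcon
          rw [Set.not_nonempty_iff_eq_empty] at hcon
          rw [hcon, show EMetric.diam (∅ : Set (Fin m → ℝ)) = 0 from EMetric.diam_empty, le_zero_iff] at hge
          exact base_ne_zero (n + k₀) hge
        have : (d' n) ^ (s:ℝ) = EMetric.diam (t n) ^ (s:ℝ) := by
          simp only [hd']
          rw [heq]
        rw [this]
        refine le_add_right ?_
        rw [iSup_pos hne]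
      · have : (d' n) ^ (s:ℝ) = a ^ (n + k₀) := by
          simp only [hd']
          rw [heq, ← con_eq_pow s (n + k₀), con]
        rw [this]
        exact le_add_left le_rfl
    calc con s (kk n) ≤ (2 * d' n) ^ (s:ℝ) := h1
      _ = twoS * (d' n) ^ (s:ℝ) := h2
      _ ≤ _ := mul_le_mul_right h3 _
  -- choose base points
  have hptex : ∀ n : ℕ, ∃ p : Fin m → ℝ, ((t n ∩ X).Nonempty → p ∈ t n ∩ X) := by
    intro n
    by_cases h : (t n ∩ X).Nonempty
    · exact ⟨h.choose, fun _ => h.choose_spec⟩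
    · exact ⟨0, fun h' => absurd h' h⟩
  choose pt hpt using hptex
  set b : ℕ → Fin m → ℕ := fun n i => ⌊pt n i * 2 ^ kk n⌋₊ with hb
  set f : (ℕ × (Fin m → Fin 3)) → P m :=
    fun ne => (kk ne.1, fun i => b ne.1 i + ((ne.2 i : ℕ)) - 1) with hf
  -- total sum bound
  have hcard3 : (Fintype.card (Fin m → Fin 3) : ℝ≥0∞) = (3:ℝ≥0∞) ^ m := by
    rw [Fintype.card_fun, Fintype.card_fin, Fintype.card_fin]
    push_cast
    ring
  have htot : ∑' i : ℕ × (Fin m → Fin 3), con s (f i).1 ≤ ε₀ := by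
    calc ∑' i : ℕ × (Fin m → Fin 3), con s (f i).1
        = ∑' n : ℕ, ∑' e : Fin m → Fin 3, con s (f (n, e)).1 :=
          ENNReal.tsum_prod (f := fun n e => con s (f (n, e)).1)
      _ = ∑' n : ℕ, (3:ℝ≥0∞) ^ m * con s (kk n) := by
          refine tsum_congr fun n => ?_
          rw [tsum_fintype]
          have : ∀ e : Fin m → Fin 3, con s (f (n, e)).1 = con s (kk n) := fun _ => rfl
          simp only [this]
          rw [Finset.sum_const, nsmul_eq_mul, Finset.card_univ, hcard3]
      _ ≤ ∑' n : ℕ, (3:ℝ≥0∞) ^ m *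
          (twoS * ((⨆ _ : (t n).Nonempty, EMetric.diam (t n) ^ s) + a ^ (n + k₀))) :=
          Summable.tsum_le_tsum (fun n => mul_le_mul_right (hcon_bound n) _)
            ENNReal.summable ENNReal.summable
      _ = (3:ℝ≥0∞) ^ m * twoS *
          ((∑' n, ⨆ _ : (t n).Nonempty, EMetric.diam (t n) ^ s) + ∑' n : ℕ, a ^ (n + k₀)) := by
          calc ∑' n : ℕ, (3:ℝ≥0∞) ^ m *
              (twoS * ((⨆ _ : (t n).Nonempty, EMetric.diam (t n) ^ s) + a ^ (n + k₀)))
              = ∑' n : ℕ, ((3:ℝ≥0∞) ^ m * twoS) *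
                ((⨆ _ : (t n).Nonempty, EMetric.diam (t n) ^ s) + a ^ (n + k₀)) :=
                tsum_congr fun n => by ring
            _ = (3:ℝ≥0∞) ^ m * twoS * ∑' n : ℕ,
                ((⨆ _ : (t n).Nonempty, EMetric.diam (t n) ^ s) + a ^ (n + k₀)) :=
                ENNReal.tsum_mul_left
            _ = _ := by rw [ENNReal.tsum_add]
      _ ≤ (3:ℝ≥0∞) ^ m * twoS * (δ + δ) := mul_le_mul_right (add_le_add htsum.le hk₀tail) _
      _ = D * δ := by rw [hD]; ring
      _ ≤ ε₀ := by rw [hδ]; exact ENNReal.mul_div_le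
  -- the cover
  have hcover : X ⊆ ⋃ i : ℕ × (Fin m → Fin 3), cube (f i) := by
    intro x hx
    obtain ⟨n, hxn⟩ := Set.mem_iUnion.1 (htcov hx)
    have hne : (t n ∩ X).Nonempty := ⟨x, hxn, hx⟩
    have hp := hpt n hne
    set K := kk n with hK
    have h2K : (0:ℝ) < 2 ^ K := by positivity
    have hdist : ∀ i, |x i - pt n i| ≤ (2:ℝ)⁻¹ ^ K := by
      intro i
      have hed : edist (x i) (pt n i) ≤ (2:ℝ≥0∞)⁻¹ ^ K := by
        calc edist (x i) (pt n i) ≤ edist x (pt n) := edist_le_pi_edist x (pt n) i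
          _ ≤ EMetric.diam (t n) := EMetric.edist_le_diam_of_mem hxn hp.1
          _ ≤ d' n := le_max_left _ _
          _ ≤ (2:ℝ≥0∞)⁻¹ ^ K := hkkle n
      rw [edist_dist, base_ofReal] at hed
      have := (ENNReal.ofReal_le_ofReal_iff (by positivity)).1 hed
      rwa [Real.dist_eq] at this
    have hx01 : ∀ i, 0 ≤ x i ∧ x i ≤ 1 := fun i => (hX hx i : _)
    have hp01 : ∀ i, 0 ≤ pt n i ∧ pt n i ≤ 1 := fun i => (hX hp.2 i : _)
    set v : Fin m → ℕ := fun i => ⌊x i * 2 ^ K⌋₊ with hv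
    have hinv : (2:ℝ)⁻¹ ^ K * 2 ^ K = 1 := by
      rw [inv_pow, inv_mul_cancel₀ (by positivity)]
    have hub : ∀ i, v i ≤ b n i + 1 := by
      intro i
      have h1 : x i * 2 ^ K ≤ pt n i * 2 ^ K + 1 := by
        have := (abs_le.1 (hdist i)).2
        nlinarith [hinv]
      calc v i ≤ ⌊pt n i * 2 ^ K + 1⌋₊ := Nat.floor_le_floor h1
        _ = b n i + 1 := Nat.floor_add_one (by
            have := (hp01 i).1
            positivity)
    have hlb : ∀ i, b n i ≤ v i + 1 := by
      intro i
      have h1 : pt n i * 2 ^ K ≤ x i * 2 ^ K + 1 := by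
        have := (abs_le.1 (hdist i)).1
        nlinarith [hinv]
      calc b n i ≤ ⌊x i * 2 ^ K + 1⌋₊ := Nat.floor_le_floor h1
        _ = v i + 1 := Nat.floor_add_one (by
            have := (hx01 i).1
            positivity)
    set e : Fin m → Fin 3 := fun i => ⟨v i + 1 - b n i, by have := hub i; omega⟩ with he
    refine Set.mem_iUnion.2 ⟨(n, e), ?_⟩
    have hfe : ∀ i, (f (n, e)).2 i = v i := by
      intro i
      show b n i + (v i + 1 - b n i) - 1 = v i
      have := hlb i
      omega
    show x ∈ dyCube m (kk n) (f (n, e)).2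
    intro i
    rw [hfe i]
    have hx0 : (0:ℝ) ≤ x i * 2 ^ K := by
      have := (hx01 i).1
      positivity
    constructor
    · rw [div_le_iff₀ h2K]
      exact Nat.floor_le hx0
    · rw [lt_div_iff₀ h2K]
      have := Nat.lt_succ_floor (x i * 2 ^ K)
      push_cast at this ⊢
      linarith
  obtain ⟨𝒞, hc1, hc2, hc3, hc4, hc5⟩ := core hs f hε₀lt1 htot
  refine ⟨𝒞, hc1, hc2, fun x hx => hc3 (hcover hx), ?_, hc5⟩
  refine le_trans (le_of_eq ?_) (le_trans hc4 hε₀le)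
  rfl
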